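/- Let ψ : ℝ² → ℝ be differentiable, let p₀ ∈ ℝ² and r > 0, and suppose ψ takes the constant value c₀ at every point of the circle S = {p ∈ ℝ² : ‖p − p₀‖ = r}. Let γ = (γ₁, γ₂) : ℝ → ℝ² be a differentiable curve with γ₁′(t) = (∂ψ/∂y)(γ(t)) and γ₂′(t) = −(∂ψ/∂x)(γ(t)) for all t, and suppose ψ(γ(0)) ≠ c₀. Then the trajectory never reaches the obstacle boundary: ‖γ(t) − p₀‖ ≠ r for all t ∈ ℝ. -/

import Mathlib

/-- If the stream function `ψ` is constant equal to `c₀` on the circle of radius `r` about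
`p₀`, then any flow trajectory starting on a level value different from `c₀` never reaches
the obstacle boundary. -/
theorem streamline_collision_free (ψ : ℝ × ℝ → ℝ) (hψ : Differentiable ℝ ψ)
    (p₀ : ℝ × ℝ) (r : ℝ) (hr : 0 < r) (c₀ : ℝ)
    (hconst : ∀ q : ℝ × ℝ,
      Real.sqrt ((q.1 - p₀.1) ^ 2 + (q.2 - p₀.2) ^ 2) = r → ψ q = c₀)
    (γ₁ γ₂ : ℝ → ℝ)
    (h1 : ∀ t : ℝ, HasDerivAt γ₁ (fderiv ℝ ψ (γ₁ t, γ₂ t) (0, 1)) t)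
    (h2 : ∀ t : ℝ, HasDerivAt γ₂ (-(fderiv ℝ ψ (γ₁ t, γ₂ t) (1, 0))) t)
    (h0 : ψ (γ₁ 0, γ₂ 0) ≠ c₀) :
    ∀ t : ℝ, Real.sqrt ((γ₁ t - p₀.1) ^ 2 + (γ₂ t - p₀.2) ^ 2) ≠ r := by
  set g : ℝ → ℝ := fun t => ψ (γ₁ t, γ₂ t) with hg
  have hderiv : ∀ t : ℝ, HasDerivAt g 0 t := by
    intro t
    have hcurve : HasDerivAt (fun t => (γ₁ t, γ₂ t))
        (fderiv ℝ ψ (γ₁ t, γ₂ t) (0, 1), -(fderiv ℝ ψ (γ₁ t, γ₂ t) (1, 0))) t :=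
      (h1 t).prodMk (h2 t)
    have hψ' : HasFDerivAt ψ (fderiv ℝ ψ (γ₁ t, γ₂ t)) (γ₁ t, γ₂ t) :=
      (hψ _).hasFDerivAt
    have := hψ'.comp_hasDerivAt t hcurve
    convert this using 1
    case e'_4 => rfl
    case e'_5 => rfl
    case e'_8 => rfl
    set D := fderiv ℝ ψ (γ₁ t, γ₂ t)
    have : (D (0, 1), -(D (1, 0))) =
        (D (0, 1)) • ((1 : ℝ), (0 : ℝ)) + (-(D (1, 0))) • ((0 : ℝ), (1 : ℝ)) := by
      simp [Prod.ext_iff]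
    rw [this, map_add, map_smul, map_smul]
    simp
    ring
  have hconst' : ∀ t : ℝ, g t = g 0 := by
    intro t
    have : ∀ s : ℝ, deriv g s = 0 := fun s => (hderiv s).deriv
    exact is_const_of_deriv_eq_zero (fun s => (hderiv s).differentiableAt) this t 0
  intro t ht
  exact h0 ((hconst' t).symm.trans (hconst (γ₁ t, γ₂ t) ht))
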